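/- arXiv:2405.19218 — 2 statements merged into one kernel-verified Lean document; each statement's English description precedes it below -/
import Mathlib

section
/- For positive integers n, m and any integer a, (∑_{k=1}^{n} exp(2πi·k·a/n)) · (∑_{j=1}^{m} exp(2πi·j·a/m)) = gcd(n, m) · ∑_{k=1}^{lcm(n,m)} exp(2πi·k·a/lcm(n,m)). -/
open Complex Finset

lemma key (n : ℕ) (hn : 0 < n) (a : ℤ) :
    (∑ k ∈ Finset.Icc 1 n,
        Complex.exp (2 * Real.pi * Complex.I * (k : ℂ) * (a : ℂ) / (n : ℂ))) =
      if (n : ℤ) ∣ a then (n : ℂ) else 0 := by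
  have hn0 : (n : ℂ) ≠ 0 := Nat.cast_ne_zero.mpr hn.ne'
  set ζ : ℂ := Complex.exp (2 * Real.pi * Complex.I * (a : ℂ) / (n : ℂ)) with hζ
  have hterm : ∀ k : ℕ, Complex.exp (2 * Real.pi * Complex.I * (k : ℂ) * (a : ℂ) / (n : ℂ)) = ζ ^ k := by
    intro k
    rw [hζ, ← Complex.exp_nat_mul]
    ring_nf
  rw [Finset.sum_congr rfl fun k _ => hterm k]
  by_cases hdvd : (n : ℤ) ∣ a
  · obtain ⟨c, hc⟩ := hdvd
    have hz1 : ζ = 1 := by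
      rw [hζ, hc]
      push_cast
      rw [show 2 * ↑Real.pi * Complex.I * ((n : ℂ) * (c : ℂ)) / (n : ℂ)
          = (c : ℂ) * (2 * ↑Real.pi * Complex.I) by field_simp]
      exact Complex.exp_int_mul_two_pi_mul_I c
    rw [if_pos ⟨c, hc⟩]
    simp [hz1, mul_comm]
  · rw [if_neg hdvd]
    have hzn : ζ ^ n = 1 := by
      rw [hζ, ← Complex.exp_nat_mul]
      rw [show (n : ℂ) * (2 * ↑Real.pi * Complex.I * (a : ℂ) / (n : ℂ))
          = (a : ℂ) * (2 * ↑Real.pi * Complex.I) by field_simp]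
      exact Complex.exp_int_mul_two_pi_mul_I a
    have hz1 : ζ ≠ 1 := by
      intro h
      rw [hζ, Complex.exp_eq_one_iff] at h
      obtain ⟨k, hk⟩ := h
      apply hdvd
      refine ⟨k, ?_⟩
      have : (a : ℂ) = (n : ℂ) * (k : ℂ) := by
        have hπ : (2 * (Real.pi : ℂ) * Complex.I) ≠ 0 := by
          simp [Real.pi_ne_zero, Complex.I_ne_zero]
        field_simp at hk
        apply mul_left_cancel₀ hπ
        linear_combination (2 * (Real.pi : ℂ) * Complex.I) * hk
      exact_mod_cast this
    have hIcc : Finset.Icc 1 n = Finset.Ico 1 (n + 1) := (Finset.Ico_add_one_right_eq_Icc 1 n).symm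
    have hsplit : ∑ k ∈ Finset.range (n+1), ζ ^ k
        = ζ ^ 0 + ∑ k ∈ Finset.Icc 1 n, ζ ^ k := by
      rw [hIcc, Finset.range_eq_Ico, ← Finset.sum_Ico_consecutive _ (Nat.zero_le 1) (Nat.le_add_left 1 n)]
      simp
    have hgeo : ∑ k ∈ Finset.range (n+1), ζ ^ k = (ζ ^ (n+1) - 1) / (ζ - 1) :=
      geom_sum_eq hz1 _
    have : (ζ ^ (n+1) - 1) / (ζ - 1) = 1 := by
      rw [pow_succ, hzn, one_mul]
      field_simp [sub_ne_zero.mpr hz1]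
    rw [hgeo, this] at hsplit
    simp at hsplit
    exact hsplit

theorem stmt_14 (n m : ℕ) (hn : 0 < n) (hm : 0 < m) (a : ℤ) :
    (∑ k ∈ Finset.Icc 1 n,
        Complex.exp (2 * Real.pi * Complex.I * (k : ℂ) * (a : ℂ) / (n : ℂ))) *
      (∑ j ∈ Finset.Icc 1 m,
        Complex.exp (2 * Real.pi * Complex.I * (j : ℂ) * (a : ℂ) / (m : ℂ))) =
      (Nat.gcd n m : ℂ) *
        ∑ k ∈ Finset.Icc 1 (Nat.lcm n m),
          Complex.exp (2 * Real.pi * Complex.I * (k : ℂ) * (a : ℂ) / (Nat.lcm n m : ℂ)) := by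
  have hl : 0 < Nat.lcm n m := Nat.lcm_pos hn hm
  rw [key n hn a, key m hm a, key (Nat.lcm n m) hl a]
  have hdn : (n : ℤ) ∣ (Nat.lcm n m : ℤ) := Int.natCast_dvd_natCast.mpr (Nat.dvd_lcm_left n m)
  have hdm : (m : ℤ) ∣ (Nat.lcm n m : ℤ) := Int.natCast_dvd_natCast.mpr (Nat.dvd_lcm_right n m)
  by_cases h1 : (n : ℤ) ∣ a
  · by_cases h2 : (m : ℤ) ∣ a
    · have hlcm : ((Nat.lcm n m : ℕ) : ℤ) ∣ a := by
        have := Int.natCast_dvd.mpr (Nat.lcm_dvd (Int.natCast_dvd.mp h1) (Int.natCast_dvd.mp h2))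
        simpa [Int.lcm, Int.natAbs_natCast] using this
      rw [if_pos h1, if_pos h2, if_pos hlcm]
      have := Nat.gcd_mul_lcm n m
      exact_mod_cast this.symm
    · have hlcm : ¬ ((Nat.lcm n m : ℕ) : ℤ) ∣ a := fun h => h2 (dvd_trans hdm h)
      rw [if_neg h2, if_neg hlcm]
      ring
  · have hlcm : ¬ ((Nat.lcm n m : ℕ) : ℤ) ∣ a := fun h => h1 (dvd_trans hdn h)
    rw [if_neg h1, if_neg hlcm]
    ring
end

section
/- Let r > 0 be a real number. Then there exists a sequence of fractions p_i/n_i with p_i and n_i positive integers, gcd(p_i, n_j) = 1 for all i, j, such that the partial products ∏_{i=1}^{k} p_i/n_i converge to r as k → ∞. -/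
open Filter Topology

/-- State: (product of numerators, product of denominators) after k steps. -/
noncomputable def st17 (r : ℝ) : ℕ → ℕ × ℕ
  | 0 => (1, 1)
  | k + 1 =>
    let N := (st17 r k).1
    let D := (st17 r k).2
    let a := (k + 1) * N
    let p := 2 * ⌊r * 2 ^ a * D / N / 2⌋₊ + 1
    (N * p, D * 2 ^ a)

noncomputable def pp17 (r : ℝ) (k : ℕ) : ℕ :=
  2 * ⌊r * 2 ^ ((k + 1) * (st17 r k).1) * (st17 r k).2 / (st17 r k).1 / 2⌋₊ + 1

noncomputable def nn17 (r : ℝ) (k : ℕ) : ℕ := 2 ^ ((k + 1) * (st17 r k).1)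

lemma st17_succ (r : ℝ) (k : ℕ) :
    st17 r (k + 1) = ((st17 r k).1 * pp17 r k, (st17 r k).2 * nn17 r k) := rfl

lemma st17_pos (r : ℝ) (k : ℕ) : 0 < (st17 r k).1 ∧ 0 < (st17 r k).2 := by
  induction k with
  | zero => exact ⟨one_pos, one_pos⟩
  | succ k ih =>
    rw [st17_succ]
    exact ⟨Nat.mul_pos ih.1 (Nat.succ_pos _), Nat.mul_pos ih.2 (pow_pos two_pos _)⟩

lemma prod17 (r : ℝ) (k : ℕ) :
    ∏ i ∈ Finset.range k, (pp17 r i : ℝ) / (nn17 r i : ℝ)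
      = ((st17 r k).1 : ℝ) / ((st17 r k).2 : ℝ) := by
  induction k with
  | zero => simp [st17]
  | succ k ih =>
    rw [Finset.prod_range_succ, ih, st17_succ]
    push_cast
    rw [div_mul_div_comm]

lemma err17 (r : ℝ) (hr : 0 < r) (k : ℕ) :
    |((st17 r (k + 1)).1 : ℝ) / ((st17 r (k + 1)).2 : ℝ) - r| ≤ 1 / (k + 1) := by
  obtain ⟨hN, hD⟩ := st17_pos r k
  set N := (st17 r k).1 with hNdef
  set D := (st17 r k).2 with hDdef
  set a := (k + 1) * N with hadef
  set x : ℝ := r * 2 ^ a * D / N with hxdef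
  have hNR : (0:ℝ) < N := by exact_mod_cast hN
  have hDR : (0:ℝ) < D := by exact_mod_cast hD
  have hx : 0 ≤ x := by positivity
  set p := 2 * ⌊x / 2⌋₊ + 1 with hpdef
  have hpp : pp17 r k = p := rfl
  have hfl1 : ((⌊x / 2⌋₊ : ℝ)) ≤ x / 2 := Nat.floor_le (by positivity)
  have hfl2 : x / 2 - 1 < (⌊x / 2⌋₊ : ℝ) := Nat.sub_one_lt_floor _
  have hperr : |(p : ℝ) - x| ≤ 1 := by
    rw [abs_le]
    constructor <;> push_cast [hpdef] <;> nlinarith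
  have hr_eq : r = x * N / (2 ^ a * D) := by
    rw [hxdef]
    field_simp
  have hst : ((st17 r (k + 1)).1 : ℝ) / ((st17 r (k + 1)).2 : ℝ)
      = (N : ℝ) * p / (D * 2 ^ a) := by
    rw [st17_succ, hpp]
    show ((N * p : ℕ) : ℝ) / ((D * 2 ^ a : ℕ) : ℝ) = _
    push_cast
    ring
  have h2a : (0:ℝ) < 2 ^ a := by positivity
  have key : ((st17 r (k + 1)).1 : ℝ) / ((st17 r (k + 1)).2 : ℝ) - r
      = (N : ℝ) / (D * 2 ^ a) * ((p : ℝ) - x) := by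
    rw [hst, hr_eq]
    field_simp
  rw [key, abs_mul]
  have h1 : |(N : ℝ) / (D * 2 ^ a)| = (N : ℝ) / (D * 2 ^ a) := by
    rw [abs_of_nonneg]; positivity
  rw [h1]
  have hbound : (N : ℝ) / (D * 2 ^ a) ≤ 1 / (k + 1) := by
    rw [div_le_div_iff₀ (by positivity) (by positivity)]
    have h2 : ((k + 1) * N : ℝ) ≤ 2 ^ a := by
      have : a < 2 ^ a := Nat.lt_two_pow_self
      have : (a : ℝ) ≤ 2 ^ a := by exact_mod_cast this.le
      calc ((k + 1) * N : ℝ) = (a : ℝ) := by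
            rw [hadef]; push_cast; ring_nf
        _ ≤ 2 ^ a := this
    have hD1 : (1:ℝ) ≤ D := by exact_mod_cast hD
    nlinarith
  calc (N : ℝ) / (D * 2 ^ a) * |(p : ℝ) - x|
      ≤ (N : ℝ) / (D * 2 ^ a) * 1 := by
        apply mul_le_mul_of_nonneg_left hperr; positivity
    _ ≤ 1 / (k + 1) := by rw [mul_one]; exact hbound

theorem stmt_17 (r : ℝ) (hr : 0 < r) :
    ∃ p n : ℕ → ℕ,
      (∀ i, 0 < p i) ∧ (∀ i, 0 < n i) ∧
      (∀ i j, Nat.gcd (p i) (n j) = 1) ∧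
      Tendsto (fun k => ∏ i ∈ Finset.range k, (p i : ℝ) / (n i : ℝ)) atTop (𝓝 r) := by
  refine ⟨pp17 r, nn17 r, fun i => Nat.succ_pos _, fun i => pow_pos two_pos _, ?_, ?_⟩
  · intro i j
    have hodd : Odd (pp17 r i) := ⟨_, rfl⟩
    have h2 : Nat.Coprime (pp17 r i) 2 := by
      rw [Nat.coprime_two_right]; exact hodd
    exact h2.pow_right _
  · have hdist : Tendsto (fun k => |(∏ i ∈ Finset.range k, (pp17 r i : ℝ) / (nn17 r i : ℝ)) - r|)
        atTop (𝓝 0) := by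
      apply squeeze_zero' (Eventually.of_forall fun k => abs_nonneg _)
        (g := fun k : ℕ => 1 / k) ?_ tendsto_one_div_atTop_nhds_zero_nat
      filter_upwards [eventually_ge_atTop 1] with k hk
      match k, hk with
      | k + 1, _ =>
        rw [prod17]
        exact_mod_cast err17 r hr k
    rw [Metric.tendsto_atTop] at hdist ⊢
    intro ε hε
    obtain ⟨M, hM⟩ := hdist ε hε
    exact ⟨M, fun k hk => by simpa [Real.dist_eq] using hM k hk⟩
end
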